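/- Let D be a triangulated category with small coproducts and (X, Y, Z) a TTF triple on D (i.e. (X,Y) and (Y,Z) are both t-structures on D). Then the composite functor τ_X ∘ z : Z → X (inclusion of Z into D followed by the right adjoint of the inclusion of X) and the composite τ^Z ∘ x : X → Z (inclusion of X followed by the left adjoint of the inclusion of Z) are mutually quasi-inverse triangle equivalences. -/

import Mathlib

open CategoryTheory Limits Pretriangulated

universe v u

variable {C : Type u} [Category.{v} C] [Preadditive C] [Limits.HasZeroObject C]
  [HasShift C ℤ] [∀ n : ℤ, (shiftFunctor C n).Additive] [Pretriangulated C]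

/-- A t-structure on a triangulated category `C`, given by a pair of strictly full
subcategories `(U, V)` (encoded as classes of objects): `U[1] ⊆ U`, `V[-1] ⊆ V`,
`Hom(U, V) = 0`, and every object fits in a distinguished triangle with outer vertices
in `U` and `V`. -/
structure IsTStructure (U V : Set C) : Prop where
  isoU : ∀ ⦃X Y : C⦄, (X ≅ Y) → X ∈ U → Y ∈ U
  isoV : ∀ ⦃X Y : C⦄, (X ≅ Y) → X ∈ V → Y ∈ V
  shiftU : ∀ X ∈ U, X⟦(1 : ℤ)⟧ ∈ U
  shiftV : ∀ X ∈ V, X⟦(-1 : ℤ)⟧ ∈ V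
  hom_zero : ∀ ⦃X Y : C⦄, X ∈ U → Y ∈ V → ∀ f : X ⟶ Y, f = 0
  exists_triangle : ∀ M : C, ∃ (X Y : C) (_ : X ∈ U) (_ : Y ∈ V)
    (f : X ⟶ M) (g : M ⟶ Y) (h : Y ⟶ X⟦(1 : ℤ)⟧), Triangle.mk f g h ∈ (distTriang C)

namespace TTFAux

lemma precomp_iso_bij {D : Type*} [Category D] {P Q N : D} (φ : P ⟶ Q) [IsIso φ] :
    Function.Bijective (fun f : Q ⟶ N => φ ≫ f) :=
  ⟨fun f g h => by simpa using congrArg (fun t => inv φ ≫ t) h,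
   fun f => ⟨inv φ ≫ f, by simp⟩⟩

lemma postcomp_iso_bij {D : Type*} [Category D] {P Q N : D} (φ : P ⟶ Q) [IsIso φ] :
    Function.Bijective (fun f : N ⟶ P => f ≫ φ) :=
  ⟨fun f g h => by simpa using congrArg (fun t => t ≫ inv φ) h,
   fun f => ⟨f ≫ inv φ, by simp⟩⟩

lemma postcomp_bij {T : Triangle C} (hT : T ∈ distTriang C) (W : C)
    (h1 : ∀ f : W ⟶ T.obj₃, f = 0) (h2 : ∀ f : W ⟶ T.obj₃⟦(-1 : ℤ)⟧, f = 0) :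
    Function.Bijective (fun f : W ⟶ T.obj₁ => f ≫ T.mor₁) := by
  constructor
  · intro f g hfg
    simp only at hfg
    have h : (f - g) ≫ T.invRotate.mor₂ = 0 := by
      change (f - g) ≫ T.mor₁ = 0
      rw [Preadditive.sub_comp, hfg, sub_self]
    obtain ⟨h', hh'⟩ := Triangle.coyoneda_exact₂ _ (inv_rot_of_distTriang _ hT) (f - g) h
    simp only [h2 h', zero_comp] at hh'
    exact sub_eq_zero.mp (hh'.trans zero_comp)
  · intro m
    obtain ⟨f, hf⟩ := Triangle.coyoneda_exact₂ T hT m (h1 _)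
    exact ⟨f, hf.symm⟩

lemma precomp_bij {T : Triangle C} (hT : T ∈ distTriang C) (N : C)
    (h1 : ∀ f : T.obj₃ ⟶ N, f = 0) (h2 : ∀ f : T.obj₃⟦(-1 : ℤ)⟧ ⟶ N, f = 0) :
    Function.Bijective (fun f : T.obj₂ ⟶ N => T.mor₁ ≫ f) := by
  constructor
  · intro f g hfg
    simp only at hfg
    have h : T.mor₁ ≫ (f - g) = 0 := by
      rw [Preadditive.comp_sub, hfg, sub_self]
    obtain ⟨h', hh'⟩ := Triangle.yoneda_exact₂ T hT (f - g) h
    rw [h1 h', comp_zero] at hh'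
    exact sub_eq_zero.mp hh'
  · intro m
    obtain ⟨f, hf⟩ := Triangle.yoneda_exact₂ _ (inv_rot_of_distTriang _ hT) m (h2 _)
    exact ⟨f, hf.symm⟩


lemma counit_precomp_bij (X Y Z : Set C)
    (hXY : IsTStructure X Y) (hYZ : IsTStructure Y Z)
    (τX : C ⥤ ObjectProperty.FullSubcategory (· ∈ X))
    (adjX : ObjectProperty.ι (· ∈ X) ⊣ τX)
    {M N : C} (hM : M ∈ Z) (hN : N ∈ Z) :
    Function.Bijective (fun f : M ⟶ N => adjX.counit.app M ≫ f) := by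
  obtain ⟨A, B, hA, hB, a, b, c, hT⟩ := hXY.exists_triangle M
  have pre_a : Function.Bijective (fun f : M ⟶ N => a ≫ f) :=
    precomp_bij hT N (fun f => hYZ.hom_zero hB hN f)
      (fun f => hYZ.hom_zero (hXY.shiftV B hB) hN f)
  let A' : ObjectProperty.FullSubcategory (· ∈ X) := ⟨A, hA⟩
  let ab : A' ⟶ τX.obj M := adjX.homEquiv A' M a
  have hae : (ObjectProperty.ι (· ∈ X)).map ab ≫ adjX.counit.app M = a := by
    have := (adjX.homEquiv A' M).symm_apply_apply a
    rwa [Adjunction.homEquiv_counit] at this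
  have hiso : IsIso ab := by
    apply isIso_of_yoneda_map_bijective
    intro T'
    have post_a : Function.Bijective (fun f : T'.obj ⟶ A => f ≫ a) :=
      postcomp_bij hT T'.obj (fun f => hXY.hom_zero T'.property hB f)
        (fun f => hXY.hom_zero T'.property (hXY.shiftV B hB) f)
    have heq : (fun t : T' ⟶ A' => t ≫ ab) =
        (adjX.homEquiv T' M) ∘ (fun f : T'.obj ⟶ A => f ≫ a) ∘ (fun t : T' ⟶ A' => t.hom) := by
      funext t
      exact (adjX.homEquiv_naturality_left t a).symm
    rw [heq]
    exact (adjX.homEquiv T' M).bijective.comp (post_a.comp ((ObjectProperty.fullyFaithfulι _).map_bijective _ _))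
  haveI : IsIso ((ObjectProperty.ι (· ∈ X)).map ab) :=
    (ObjectProperty.ι (· ∈ X)).map_isIso ab
  have key : (fun f : M ⟶ N => a ≫ f) =
      (fun h => (ObjectProperty.ι (· ∈ X)).map ab ≫ h) ∘
        (fun f : M ⟶ N => adjX.counit.app M ≫ f) := by
    funext f
    simp [← hae]
  rw [key] at pre_a
  exact (Function.Bijective.of_comp_iff'
    (precomp_iso_bij ((ObjectProperty.ι (· ∈ X)).map ab)) _).mp pre_a

lemma unit_postcomp_bij (X Y Z : Set C)
    (hXY : IsTStructure X Y) (hYZ : IsTStructure Y Z)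
    (τZ : C ⥤ ObjectProperty.FullSubcategory (· ∈ Z))
    (adjZ : τZ ⊣ ObjectProperty.ι (· ∈ Z))
    {A M : C} (hA : A ∈ X) (hM : M ∈ X) :
    Function.Bijective (fun f : A ⟶ M => f ≫ adjZ.unit.app M) := by
  obtain ⟨B', Z', hB', hZ', e', g, h, hT⟩ := hYZ.exists_triangle M
  have hB1 : (B'⟦(1 : ℤ)⟧)⟦(-1 : ℤ)⟧ ∈ Y :=
    hYZ.isoU ((shiftFunctorCompIsoId C (1 : ℤ) (-1) (by norm_num)).app B').symm hB'
  have hrT := rot_of_distTriang _ hT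
  have post_g : Function.Bijective (fun f : A ⟶ M => f ≫ g) :=
    postcomp_bij hrT A (fun f => hXY.hom_zero hA (hYZ.shiftU B' hB') f)
      (fun f => hXY.hom_zero hA hB1 f)
  let Z'' : ObjectProperty.FullSubcategory (· ∈ Z) := ⟨Z', hZ'⟩
  let gb : τZ.obj M ⟶ Z'' := (adjZ.homEquiv M Z'').symm g
  have hge : adjZ.unit.app M ≫ (ObjectProperty.ι (· ∈ Z)).map gb = g := by
    have := (adjZ.homEquiv M Z'').apply_symm_apply g
    rwa [Adjunction.homEquiv_unit] at this
  have hiso : IsIso gb := by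
    apply isIso_of_coyoneda_map_bijective
    intro T'
    have pre_g : Function.Bijective (fun f : Z' ⟶ T'.obj => g ≫ f) :=
      precomp_bij hrT T'.obj (fun f => hYZ.hom_zero (hYZ.shiftU B' hB') T'.property f)
        (fun f => hYZ.hom_zero hB1 T'.property f)
    have heq : (fun t : Z'' ⟶ T' => gb ≫ t) =
        (adjZ.homEquiv M T').symm ∘ (fun f : Z' ⟶ T'.obj => g ≫ f) ∘ (fun t : Z'' ⟶ T' => t.hom) := by
      funext t
      apply (adjZ.homEquiv M T').injective
      simp only [Function.comp_apply, Equiv.apply_symm_apply]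
      rw [adjZ.homEquiv_naturality_right]
      have : adjZ.homEquiv M Z'' gb = g := (adjZ.homEquiv M Z'').apply_symm_apply g
      rw [this]
      rfl
    rw [heq]
    exact ((adjZ.homEquiv M T').symm.bijective).comp (pre_g.comp ((ObjectProperty.fullyFaithfulι _).map_bijective _ _))
  haveI : IsIso ((ObjectProperty.ι (· ∈ Z)).map gb) :=
    (ObjectProperty.ι (· ∈ Z)).map_isIso gb
  have key : (fun f : A ⟶ M => f ≫ g) =
      (fun h => h ≫ (ObjectProperty.ι (· ∈ Z)).map gb) ∘
        (fun f : A ⟶ M => f ≫ adjZ.unit.app M) := by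
    funext f
    simp [← hge]
  rw [key] at post_g
  exact (Function.Bijective.of_comp_iff'
    (postcomp_iso_bij ((ObjectProperty.ι (· ∈ Z)).map gb)) _).mp post_g

end TTFAux

/-- **TTF triples give equivalences between the outer classes.**
Let `C` be a triangulated category with small coproducts and `(X, Y, Z)` a TTF triple on `C`
(i.e. `(X, Y)` and `(Y, Z)` are t-structures).  Let `x`, `z` be the inclusions of the full
subcategories determined by `X` and `Z`, let `τX` be a right adjoint of `x` and `τZ` a left
adjoint of `z`.  Then the composite functors `τX ∘ z : Z ⥤ X` and `τZ ∘ x : X ⥤ Z` are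
mutually quasi-inverse equivalences. -/
theorem stmt1 [HasCoproducts.{v} C] (X Y Z : Set C)
    (hXY : IsTStructure X Y) (hYZ : IsTStructure Y Z)
    (τX : C ⥤ ObjectProperty.FullSubcategory (· ∈ X))
    (adjX : ObjectProperty.ι (· ∈ X) ⊣ τX)
    (τZ : C ⥤ ObjectProperty.FullSubcategory (· ∈ Z))
    (adjZ : τZ ⊣ ObjectProperty.ι (· ∈ Z)) :
    Nonempty ((ObjectProperty.ι (· ∈ Z) ⋙ τX) ⋙
        (ObjectProperty.ι (· ∈ X) ⋙ τZ) ≅ 𝟭 (ObjectProperty.FullSubcategory (· ∈ Z))) ∧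
    Nonempty ((ObjectProperty.ι (· ∈ X) ⋙ τZ) ⋙
        (ObjectProperty.ι (· ∈ Z) ⋙ τX) ≅ 𝟭 (ObjectProperty.FullSubcategory (· ∈ X))) := by
  have hR : ∀ (M N : ObjectProperty.FullSubcategory (· ∈ Z)),
      Function.Bijective (fun f : M ⟶ N =>
        (ObjectProperty.ι (· ∈ Z) ⋙ τX).map f) := by
    intro M N
    have key := TTFAux.counit_precomp_bij X Y Z hXY hYZ τX adjX M.property N.property
    have heq : (fun f : M ⟶ N => (ObjectProperty.ι (· ∈ Z) ⋙ τX).map f) =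
        (adjX.homEquiv (τX.obj M.obj) N.obj) ∘
          (fun f : M.obj ⟶ N.obj => adjX.counit.app M.obj ≫ f) ∘ (fun f : M ⟶ N => f.hom) := by
      funext f
      simp only [Function.comp_apply]
      rw [adjX.homEquiv_naturality_right, Adjunction.homEquiv_unit]
      simp
    rw [heq]
    exact (adjX.homEquiv _ _).bijective.comp (key.comp ((ObjectProperty.fullyFaithfulι _).map_bijective _ _))
  have hL : ∀ (A A' : ObjectProperty.FullSubcategory (· ∈ X)),
      Function.Bijective (fun f : A ⟶ A' =>
        (ObjectProperty.ι (· ∈ X) ⋙ τZ).map f) := by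
    intro A A'
    have key := TTFAux.unit_postcomp_bij X Y Z hXY hYZ τZ adjZ A.property A'.property
    have heq : (fun f : A ⟶ A' => (ObjectProperty.ι (· ∈ X) ⋙ τZ).map f) =
        (adjZ.homEquiv A.obj (τZ.obj A'.obj)).symm ∘
          (fun f : A.obj ⟶ A'.obj => f ≫ adjZ.unit.app A'.obj) ∘ (fun f : A ⟶ A' => f.hom) := by
      funext f
      apply (adjZ.homEquiv A.obj (τZ.obj A'.obj)).injective
      simp only [Function.comp_apply, Equiv.apply_symm_apply]
      rw [Adjunction.homEquiv_unit]
      simpa using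
        (adjZ.unit.naturality ((ObjectProperty.ι (· ∈ X)).map f)).symm
    rw [heq]
    exact (adjZ.homEquiv _ _).symm.bijective.comp (key.comp ((ObjectProperty.fullyFaithfulι _).map_bijective _ _))
  haveI : (ObjectProperty.ι (· ∈ Z) ⋙ τX).Full :=
    { map_surjective := fun {M N} => (hR M N).2 }
  haveI : (ObjectProperty.ι (· ∈ Z) ⋙ τX).Faithful :=
    { map_injective := fun {M N} => (hR M N).1 }
  haveI : (ObjectProperty.ι (· ∈ X) ⋙ τZ).Full :=
    { map_surjective := fun {A A'} => (hL A A').2 }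
  haveI : (ObjectProperty.ι (· ∈ X) ⋙ τZ).Faithful :=
    { map_injective := fun {A A'} => (hL A A').1 }
  let adj := adjX.comp adjZ
  haveI : IsIso adj.counit := inferInstance
  haveI : IsIso adj.unit := inferInstance
  exact ⟨⟨asIso adj.counit⟩, ⟨(asIso adj.unit).symm⟩⟩
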